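/- Let C1 and C2 be sets of probability distributions on a domain X such that d_TV(p,q) > γ for every q ∈ C1 and every p ∈ C2. Suppose there exist a distribution Q over C1, a distribution p ∈ C2, and ζ ∈ (0,1/2) such that d_TV(|Q|^m, p^m) < ζ. Then for every learner A : X^m → Δ(X) there exists r ∈ C1 ∪ C2 such that P_{S∼r^m}[d_TV(A(S), r) > γ/2] ≥ 1/2 − ζ/2. -/

import Mathlib

open scoped ENNReal NNReal

/-- Total variation distance between two discrete distributions. -/
noncomputable def tv {X : Type*} (p q : PMF X) : ℝ :=
  (∑' x, |(p x).toReal - (q x).toReal|) / 2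

/-- The distribution of an i.i.d. sample of size `m` from `p`, viewed as a multiset. -/
noncomputable def iid {X : Type*} (p : PMF X) : ℕ → PMF (Multiset X)
  | 0 => PMF.pure 0
  | n + 1 => (iid p n).bind fun s => p.map fun x => x ::ₘ s

/-- `|Q|^m` : first draw `q ∼ Q`, then an i.i.d. sample `S ∼ q^m`. -/
noncomputable def metaSample {X : Type*} (Q : PMF (PMF X)) (m : ℕ) : PMF (Multiset X) :=
  Q.bind fun q => iid q m

/-- An adaptive adversary: a randomized map from samples (finite multisets) to samples. -/
abbrev Adversary (X : Type*) := Multiset X → PMF (Multiset X)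

/-- `V(P)`: the distribution of `V S` for `S ∼ P` (including internal randomness). -/
noncomputable def advPush {X : Type*} (V : Adversary X) (P : PMF (Multiset X)) :
    PMF (Multiset X) := P.bind V

/-- An additive adversary only adds points: `S ⊆ V(S)` almost surely. -/
def IsAdditive {X : Type*} (V : Adversary X) : Prop :=
  ∀ S T, T ∈ (V S).support → S ≤ T

/-- A subtractive adversary only removes points: `V(S) ⊆ S` almost surely. -/
def IsSubtractive {X : Type*} (V : Adversary X) : Prop :=
  ∀ S T, T ∈ (V S).support → T ≤ S

/-- Fixed constant budget `η`: `|V(S)|` depends only on `|S|` (via `c`), and for every `m`,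
`η m − 1 < m·budget(V,m) ≤ η m` where `m·budget(V,m) = ||V(S)| − |S||`. -/
def FixedBudget {X : Type*} (V : Adversary X) (η : ℝ) : Prop :=
  ∃ c : ℕ → ℕ, (∀ S T, T ∈ (V S).support → Multiset.card T = c (Multiset.card S)) ∧
    ∀ m : ℕ, η * m - 1 < |(c m : ℝ) - m| ∧ |(c m : ℝ) - m| ≤ η * m

/-- Fixed constant budget `η` for an additive adversary (`m·budget(V,m) = |V(S)| − |S|`). -/
def FixedBudgetAdd {X : Type*} (V : Adversary X) (η : ℝ) : Prop :=
  ∃ c : ℕ → ℕ, (∀ S T, T ∈ (V S).support → Multiset.card T = c (Multiset.card S)) ∧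
    ∀ m : ℕ, η * m - 1 < (c m : ℝ) - m ∧ (c m : ℝ) - m ≤ η * m

/-- Fixed constant budget `η` for a subtractive adversary (`m·budget(V,m) = |S| − |V(S)|`). -/
def FixedBudgetSub {X : Type*} (V : Adversary X) (η : ℝ) : Prop :=
  ∃ c : ℕ → ℕ, (∀ S T, T ∈ (V S).support → Multiset.card T = c (Multiset.card S)) ∧
    ∀ m : ℕ, η * m - 1 < (m : ℝ) - c m ∧ (m : ℝ) - c m ≤ η * m

/-- Probability of an event under a discrete distribution. -/
noncomputable def probEvent {β : Type*} (P : PMF β) (E : Set β) : ℝ≥0∞ :=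
  P.toOuterMeasure E

/-- `A` with sample complexity `mc` learns the class `C` against adversary `V`,
up to error `bound + ε` with confidence `1 − δ` once `m ≥ mc ε δ`. -/
def RobustLearnerFor {X : Type*} (C : Set (PMF X)) (A : Multiset X → PMF X)
    (mc : ℝ → ℝ → ℕ) (V : Adversary X) (bound : ℝ) : Prop :=
  ∀ p ∈ C, ∀ ε δ : ℝ, 0 < ε → ε < 1 → 0 < δ → δ < 1 →
    ∀ m : ℕ, mc ε δ ≤ m →
      1 - ENNReal.ofReal δ ≤
        probEvent ((iid p m).bind V) {T | tv (A T) p ≤ bound + ε}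

/-- `C` is adaptively α-robustly learnable w.r.t. the single adversary `V` with budget `η`. -/
def RobustlyLearnableWrt {X : Type*} (C : Set (PMF X)) (α : ℝ)
    (V : Adversary X) (η : ℝ) : Prop :=
  ∃ A mc, RobustLearnerFor C A mc V (α * η)

/-- `V` (with budget `η`) is a universal α-adversary for `C`. -/
def UniversalAdversary {X : Type*} (C : Set (PMF X)) (α : ℝ)
    (V : Adversary X) (η : ℝ) : Prop :=
  ¬ RobustlyLearnableWrt C α V η

/-- `C` is adaptively α-robustly learnable w.r.t. a class `𝒱` of adversaries
(each given with its budget). -/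
def RobustlyLearnableWrtClass {X : Type*} (C : Set (PMF X)) (α : ℝ)
    (𝒱 : Set (Adversary X × ℝ)) : Prop :=
  ∃ A mc, ∀ Vη ∈ 𝒱, RobustLearnerFor C A mc Vη.1 (α * Vη.2)

/-- `C` is adaptively additively α-robustly learnable: one learner works simultaneously
against all additive adaptive adversaries with fixed constant budgets. -/
def AdditivelyRobustlyLearnable {X : Type*} (C : Set (PMF X)) (α : ℝ) : Prop :=
  ∃ A mc, ∀ V : Adversary X, ∀ η : ℝ, 0 < η → η < 1 →
    IsAdditive V → FixedBudgetAdd V η → RobustLearnerFor C A mc V (α * η)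

/-- `C` is adaptively subtractively α-robustly learnable. -/
def SubtractivelyRobustlyLearnable {X : Type*} (C : Set (PMF X)) (α : ℝ) : Prop :=
  ∃ A mc, ∀ V : Adversary X, ∀ η : ℝ, 0 < η → η < 1 →
    IsSubtractive V → FixedBudgetSub V η → RobustLearnerFor C A mc V (α * η)

/-- The pair `(V1, V2)` successfully `(γ,ζ)`-confuses `C`-generated samples of size `m`. -/
def ConfusesPair {X : Type*} (C : Set (PMF X)) (V1 V2 : Adversary X)
    (γ ζ : ℝ) (m : ℕ) : Prop :=
  ∃ p ∈ C, ∃ Q : PMF (PMF X), Q.support ⊆ C ∧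
    (∀ q ∈ Q.support, γ < tv p q) ∧
    tv (advPush V1 (metaSample Q m)) (advPush V2 (iid p m)) < ζ

/-- A single adversary `V` successfully `(γ,ζ)`-confuses `C`-generated samples of size `m`. -/
def Confuses {X : Type*} (C : Set (PMF X)) (V : Adversary X) (γ ζ : ℝ) (m : ℕ) : Prop :=
  ConfusesPair C V V γ ζ m

/-- `p` is the distribution `p_{i,j,k} = (1 − 1/j)·δ_{(0,0)} + (1/j − 1/k)·U_{B_i×{2j+1}}
 + (1/k)·δ_{(i,2j+2)}` on `ℕ × ℕ`. -/
def IsPijk (B : ℕ → Finset ℕ) (i j k : ℕ) (p : PMF (ℕ × ℕ)) : Prop :=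
  ∀ x : ℕ × ℕ,
    p x = (1 - ((j : ℝ≥0∞))⁻¹) * (if x = (0, 0) then 1 else 0)
      + (((j : ℝ≥0∞))⁻¹ - ((k : ℝ≥0∞))⁻¹) *
          (if x.1 ∈ B i ∧ x.2 = 2 * j + 1 then (((B i).card : ℝ≥0∞))⁻¹ else 0)
      + ((k : ℝ≥0∞))⁻¹ * (if x = (i, 2 * j + 2) then 1 else 0)

/-- The class `C_g = {p_{i,j,g(j)} : i, j ∈ ℕ}` (for the meaningful parameters). -/
def Cg (B : ℕ → Finset ℕ) (g : ℕ → ℕ) : Set (PMF (ℕ × ℕ)) :=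
  {p | ∃ i j : ℕ, 1 ≤ j ∧ j < g j ∧ (B i).Nonempty ∧ IsPijk B i j (g j) p}

/-- `g` is superlinear: `g(n)/n → ∞`. -/
def Superlinear (g : ℕ → ℕ) : Prop :=
  Filter.Tendsto (fun n => (g n : ℝ) / n) Filter.atTop Filter.atTop


section StmtAux

variable {X : Type*}

lemma summable_pmf (P : PMF X) : Summable fun x => (P x).toReal :=
  ENNReal.summable_toReal (by rw [P.tsum_coe]; exact ENNReal.one_ne_top)

lemma tsum_pmf (P : PMF X) : ∑' x, (P x).toReal = 1 := by
  rw [← ENNReal.tsum_toReal_eq fun x => P.apply_ne_top x, P.tsum_coe, ENNReal.toReal_one]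

lemma probEvent_le_one (P : PMF X) (E : Set X) : probEvent P E ≤ 1 := by
  rw [probEvent, PMF.toOuterMeasure_apply, ← P.tsum_coe]
  exact ENNReal.tsum_le_tsum fun x => Set.indicator_le_self _ _ x

lemma probEvent_toReal (P : PMF X) (E : Set X) :
    (probEvent P E).toReal = ∑' x, E.indicator (fun x => (P x).toReal) x := by
  rw [probEvent, PMF.toOuterMeasure_apply, ENNReal.tsum_toReal_eq]
  · congr 1; ext x
    by_cases h : x ∈ E <;> simp [Set.indicator, h]
  · intro x; by_cases h : x ∈ E <;> simp [Set.indicator, h, P.apply_ne_top x]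

lemma probEvent_compl (P : PMF X) (E : Set X) :
    (probEvent P Eᶜ).toReal = 1 - (probEvent P E).toReal := by
  have hf := summable_pmf P
  have h : (probEvent P E).toReal + (probEvent P Eᶜ).toReal = 1 := by
    rw [probEvent_toReal, probEvent_toReal,
      ← Summable.tsum_add (hf.indicator E) (hf.indicator Eᶜ), ← tsum_pmf P]
    congr 1; ext x
    by_cases h : x ∈ E <;> simp [Set.indicator, h]
  linarith

lemma tv_symm (p q : PMF X) : tv p q = tv q p := by
  simp [tv, abs_sub_comm]

lemma tv_triangle (p q r : PMF X) : tv p r ≤ tv p q + tv q r := by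
  have hpq : Summable fun x => |(p x).toReal - (q x).toReal| :=
    ((summable_pmf p).sub (summable_pmf q)).abs
  have hqr : Summable fun x => |(q x).toReal - (r x).toReal| :=
    ((summable_pmf q).sub (summable_pmf r)).abs
  have key : ∑' x, |(p x).toReal - (r x).toReal| ≤
      ∑' x, (|(p x).toReal - (q x).toReal| + |(q x).toReal - (r x).toReal|) :=
    Summable.tsum_le_tsum (fun x => abs_sub_le _ _ _)
      (((summable_pmf p).sub (summable_pmf r)).abs) (hpq.add hqr)
  rw [Summable.tsum_add hpq hqr] at key
  simp only [tv]
  linarith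

lemma le_tv (P Q : PMF X) (E : Set X) :
    (probEvent P E).toReal - (probEvent Q E).toReal ≤ tv P Q := by
  set f : X → ℝ := fun x => (P x).toReal with hfdef
  set g : X → ℝ := fun x => (Q x).toReal with hgdef
  have hf := summable_pmf P
  have hg := summable_pmf Q
  have hh : Summable fun x => f x - g x := hf.sub hg
  have habs : Summable fun x => |f x - g x| := hh.abs
  have hsum0 : ∑' x, (f x - g x) = 0 := by
    rw [Summable.tsum_sub hf hg, tsum_pmf, tsum_pmf]; ring
  have key : ∑' x, E.indicator (fun x => f x - g x) x ≤ (∑' x, |f x - g x|) / 2 := by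
    have h1 : ∀ x, E.indicator (fun x => f x - g x) x ≤ ((f x - g x) + |f x - g x|) / 2 := by
      intro x
      by_cases h : x ∈ E
      · simp only [Set.indicator_of_mem h]
        linarith [le_abs_self (f x - g x)]
      · simp only [Set.indicator_of_notMem h]
        linarith [neg_abs_le (f x - g x)]
    calc ∑' x, E.indicator (fun x => f x - g x) x
        ≤ ∑' x, ((f x - g x) + |f x - g x|) / 2 :=
          Summable.tsum_le_tsum h1 (hh.indicator E) ((hh.add habs).div_const 2)
      _ = ((∑' x, (f x - g x)) + ∑' x, |f x - g x|) / 2 := by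
          rw [tsum_div_const, Summable.tsum_add hh habs]
      _ = (∑' x, |f x - g x|) / 2 := by rw [hsum0]; ring
  rw [probEvent_toReal, probEvent_toReal]
  have hdiff : (∑' x, E.indicator f x) - (∑' x, E.indicator g x)
      = ∑' x, E.indicator (fun x => f x - g x) x := by
    rw [← Summable.tsum_sub (hf.indicator E) (hg.indicator E)]
    congr 1; ext x
    by_cases h : x ∈ E <;> simp [Set.indicator, h, hfdef, hgdef]
  rw [hdiff]
  exact key

end StmtAux

/-- (Lemma 4 of the cited work.) If all of `C1` is `γ`-far from all of `C2`
in TV distance, and some meta-distribution `Q` over `C1` and some `p ∈ C2` satisfy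
`d_TV(|Q|^m, p^m) < ζ` with `ζ ∈ (0, 1/2)`, then every learner `A` fails on some
`r ∈ C1 ∪ C2`. -/
theorem stmt5 {X : Type*} (C1 C2 : Set (PMF X)) (γ : ℝ)
    (hsep : ∀ q ∈ C1, ∀ p ∈ C2, γ < tv p q)
    (m : ℕ) (Q : PMF (PMF X)) (hQ : Q.support ⊆ C1)
    (p : PMF X) (hp : p ∈ C2) (ζ : ℝ) (hζ : ζ ∈ Set.Ioo (0 : ℝ) (1 / 2))
    (hclose : tv (metaSample Q m) (iid p m) < ζ) :
    ∀ A : Multiset X → PMF X, ∃ r ∈ C1 ∪ C2,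
      ENNReal.ofReal (1 / 2 - ζ / 2) ≤ probEvent (iid r m) {S | γ / 2 < tv (A S) r} := by
  
  intro A
  by_contra hcon
  push_neg at hcon
  obtain ⟨hζ0, hζhalf⟩ := hζ
  set θ : ℝ := 1 / 2 - ζ / 2 with hθdef
  have hθ0 : 0 < θ := by rw [hθdef]; linarith
  set E : Set (Multiset X) := {S | tv (A S) p ≤ γ / 2} with hE
  have hEc : Eᶜ = {S | γ / 2 < tv (A S) p} := by
    ext S; simp [hE, not_le]
  have hpE : 1 - θ < (probEvent (iid p m) E).toReal := by
    have h1 := hcon p (Or.inr hp)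
    have hnt : probEvent (iid p m) Eᶜ ≠ ⊤ :=
      ne_top_of_le_ne_top ENNReal.one_ne_top (probEvent_le_one _ _)
    have h2 : (probEvent (iid p m) Eᶜ).toReal < θ := by
      rw [hEc]
      exact (ENNReal.lt_ofReal_iff_toReal_lt (by rwa [← hEc])).mp h1
    have h3 := probEvent_compl (iid p m) E
    linarith
  have hq : ∀ q ∈ Q.support, probEvent (iid q m) E ≤ ENNReal.ofReal θ := by
    intro q hqs
    have hsub : E ⊆ {S | γ / 2 < tv (A S) q} := by
      intro S hS
      have hpq : γ < tv p q := hsep q (hQ hqs) p hp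
      have htri : tv p q ≤ tv p (A S) + tv (A S) q := tv_triangle p (A S) q
      have hsymm : tv p (A S) = tv (A S) p := tv_symm p (A S)
      simp only [hE, Set.mem_setOf_eq] at hS ⊢
      linarith
    exact le_of_lt (lt_of_le_of_lt ((iid q m).toOuterMeasure.mono hsub)
      (hcon q (Or.inl (hQ hqs))))
  have hM : probEvent (metaSample Q m) E ≤ ENNReal.ofReal θ := by
    rw [probEvent, metaSample, PMF.toOuterMeasure_bind_apply]
    calc ∑' q, Q q * (iid q m).toOuterMeasure E
        ≤ ∑' q, Q q * ENNReal.ofReal θ := by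
          refine ENNReal.tsum_le_tsum fun q => ?_
          by_cases h : q ∈ Q.support
          · exact mul_le_mul_right (hq q h) _
          · have : Q q = 0 := by rwa [PMF.mem_support_iff, not_not] at h
            simp [this]
      _ = ENNReal.ofReal θ := by rw [ENNReal.tsum_mul_right, Q.tsum_coe, one_mul]
  have hMr : (probEvent (metaSample Q m) E).toReal ≤ θ :=
    ENNReal.toReal_le_of_le_ofReal hθ0.le hM
  have hfinal : (probEvent (iid p m) E).toReal - (probEvent (metaSample Q m) E).toReal
      ≤ tv (metaSample Q m) (iid p m) := by
    rw [tv_symm]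
    exact le_tv (iid p m) (metaSample Q m) E
  rw [hθdef] at hpE hMr
  linarith
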